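/- For positive integers i and j with gcd(i,j) > 1 and 1 ≤ j ≤ i, if f₁ = gcd(i,j), f₂ = gcd(i, j − f₁), etc., and g₁ = gcd(i, j−1), g₂ = gcd(i, j−1−g₁), etc., then the matrix unit E_{jj}^{i×i} equals the semi-tensor difference (⊞_{n'} E_{j̄'_{n'} j̄'_{n'}}^{ī'_{n'}×ī'_{n'}}) ⊟ (⊞_n E_{j̄_n j̄_n}^{ī_n×ī_n}), where ī'_{n'} = i/f_{n'}, j̄'_{n'} = (j − Σ_{α<n'} f_α)/f_{n'}, ī_n = i/g_n, j̄_n = (j−1 − Σ_{α<n} g_α)/g_n, and each pair satisfies gcd(ī, j̄) = 1. -/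

import Mathlib

/-- The collection of all finite-dimensional real matrices. -/
def MatR := Σ m n : ℕ, Matrix (Fin m) (Fin n) ℝ

/-- Kronecker product of real matrices with `Fin` index flattening. -/
def kron {m n p q : ℕ} (A : Matrix (Fin m) (Fin n) ℝ) (B : Matrix (Fin p) (Fin q) ℝ) :
    Matrix (Fin (m * p)) (Fin (n * q)) ℝ :=
  Matrix.reindex finProdFinEquiv finProdFinEquiv (Matrix.kroneckerMap (· * ·) A B)

/-- `A ⊗ I_s` as an element of `MatR`. -/
def padK (A : MatR) (s : ℕ) : MatR :=
  ⟨A.1 * s, A.2.1 * s, kron A.2.2 (1 : Matrix (Fin s) (Fin s) ℝ)⟩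

/-- Left identity equivalence: `A ∼ B` iff `A ⊗ I_s = B ⊗ I_t` for some positive `s, t`. -/
def lie (A B : MatR) : Prop :=
  ∃ s t : ℕ, 0 < s ∧ 0 < t ∧ HEq (padK A s).2.2 (padK B t).2.2

/-- A matrix, viewed as a function `ℕ → ℕ → ℝ` vanishing outside its index range. -/
def toFun (A : MatR) : ℕ → ℕ → ℝ := fun i j =>
  if hi : i < A.1 then if hj : j < A.2.1 then A.2.2 ⟨i, hi⟩ ⟨j, hj⟩ else 0 else 0

/-- The left semi-tensor addition `A ⊞ B := (A ⊗ I_{t/m}) + (B ⊗ I_{t/p})`, where `m, p`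
are the row numbers of `A, B` and `t = lcm m p`.  (For matrices with equal row/column
ratio this agrees with the usual definition.) -/
def staM (A B : MatR) : MatR :=
  ⟨Nat.lcm A.1 B.1, A.2.1 * (Nat.lcm A.1 B.1 / A.1),
    Matrix.of fun i j =>
      toFun (padK A (Nat.lcm A.1 B.1 / A.1)) i.1 j.1 +
        toFun (padK B (Nat.lcm A.1 B.1 / B.1)) i.1 j.1⟩

/-- Entrywise scalar multiple. -/
def smulM (c : ℝ) (A : MatR) : MatR := ⟨A.1, A.2.1, c • A.2.2⟩

/-- The left semi-tensor product `A ⋉ B := (A ⊗ I_{T/n})(B ⊗ I_{T/p})`, `T = lcm n p`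
with `n` the column number of `A` and `p` the row number of `B`. -/
def stpM (A B : MatR) : MatR :=
  ⟨A.1 * (Nat.lcm A.2.1 B.1 / A.2.1), B.2.1 * (Nat.lcm A.2.1 B.1 / B.1),
    Matrix.of fun i j =>
      ∑ k ∈ Finset.range (Nat.lcm A.2.1 B.1),
        toFun (padK A (Nat.lcm A.2.1 B.1 / A.2.1)) i.1 k *
          toFun (padK B (Nat.lcm A.2.1 B.1 / B.1)) k j.1⟩

/-- A matrix is reducible if it is of the form `B ⊗ I_s` with `s ≥ 2`. -/
def reducibleM (A : MatR) : Prop := ∃ (B : MatR) (s : ℕ), 2 ≤ s ∧ A = padK B s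

/-- The (1-indexed) matrix unit `E_{i j}^{r×c}` as an element of `MatR`. -/
def unitE (i j r c : ℕ) : MatR :=
  ⟨r, c, Matrix.of fun a b => if (a : ℕ) + 1 = i ∧ (b : ℕ) + 1 = j then (1 : ℝ) else 0⟩

/-- Iterated left semi-tensor sum `F 0 ⊞ F 1 ⊞ ⋯ ⊞ F k`. -/
def bigSta (F : ℕ → MatR) : ℕ → MatR
  | 0 => F 0
  | k + 1 => staM (bigSta F k) (F (k + 1))

section GreedyAux

/-- Diagonal indicator matrix: 1 on diagonal positions in `[lo, hi)` (0-indexed). -/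
def Dmat (lo hi L : ℕ) : MatR :=
  ⟨L, L, Matrix.of fun a b : Fin L =>
    if (a : ℕ) = (b : ℕ) ∧ lo ≤ (a : ℕ) ∧ (a : ℕ) < hi then (1 : ℝ) else 0⟩

/-- The same indicator as a function on ℕ. -/
def Dfun (lo hi : ℕ) : ℕ → ℕ → ℝ := fun a b =>
  if a = b ∧ lo ≤ a ∧ a < hi then 1 else 0

lemma matR_ext {m n m' n' : ℕ} (A : Matrix (Fin m) (Fin n) ℝ) (B : Matrix (Fin m') (Fin n') ℝ)
    (hm : m = m') (hn : n = n')
    (h : ∀ (a b : ℕ) (ha : a < m) (hb : b < n),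
      A ⟨a, ha⟩ ⟨b, hb⟩ = B ⟨a, hm ▸ ha⟩ ⟨b, hn ▸ hb⟩) :
    (⟨m, n, A⟩ : MatR) = ⟨m', n', B⟩ := by
  subst hm; subst hn
  have : A = B := by
    ext a b
    have := h a.1 b.1 a.2 b.2
    simpa using this
  rw [this]

lemma toFun_padK_Dmat (lo hi L s : ℕ) (hs : 0 < s) (hhi : hi ≤ L) (a b : ℕ) :
    toFun (padK (Dmat lo hi L) s) a b = Dfun (lo * s) (hi * s) a b := by
  have key : ∀ (x y : ℕ), ((x / s = y / s ∧ lo ≤ x / s ∧ x / s < hi) ∧ x % s = y % s)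
      ↔ (x = y ∧ lo * s ≤ x ∧ x < hi * s) := by
    intro x y
    have h1 := Nat.div_add_mod x s
    have h2 := Nat.div_add_mod y s
    have h3 : lo ≤ x / s ↔ lo * s ≤ x := Nat.le_div_iff_mul_le hs
    have h4 : x / s < hi ↔ x < hi * s := Nat.div_lt_iff_lt_mul hs
    constructor
    · rintro ⟨⟨e1, e2, e3⟩, e4⟩
      rw [e1, e4] at h1
      exact ⟨h1.symm.trans h2, h3.1 e2, h4.1 e3⟩
    · rintro ⟨rfl, e2, e3⟩
      exact ⟨⟨rfl, h3.2 e2, h4.2 e3⟩, rfl⟩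
  unfold toFun padK kron Dmat Dfun
  dsimp only
  by_cases ha : a < L * s
  · by_cases hb : b < L * s
    · rw [dif_pos ha, dif_pos hb]
      rw [Matrix.reindex_apply, Matrix.submatrix_apply, Matrix.kroneckerMap_apply,
        Matrix.one_apply]
      simp only [Matrix.of_apply, Fin.ext_iff]
      have ea1 : ((finProdFinEquiv.symm ⟨a, ha⟩ : Fin L × Fin s).1 : ℕ) = a / s := rfl
      have eb1 : ((finProdFinEquiv.symm ⟨b, hb⟩ : Fin L × Fin s).1 : ℕ) = b / s := rfl
      have ea2 : ((finProdFinEquiv.symm ⟨a, ha⟩ : Fin L × Fin s).2 : ℕ) = a % s := rfl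
      have eb2 : ((finProdFinEquiv.symm ⟨b, hb⟩ : Fin L × Fin s).2 : ℕ) = b % s := rfl
      rw [ea1, eb1, ea2, eb2]
      have hk := key a b
      by_cases p : (a / s = b / s ∧ lo ≤ a / s ∧ a / s < hi) ∧ a % s = b % s
      · rw [if_pos p.1, if_pos p.2, if_pos (hk.mp p), one_mul]
      · rw [if_neg (fun hr => p (hk.mpr hr))]
        rcases Classical.em (a / s = b / s ∧ lo ≤ a / s ∧ a / s < hi) with p1 | p1
        · rw [if_pos p1, one_mul, if_neg (fun p2 => p ⟨p1, p2⟩)]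
        · rw [if_neg p1, zero_mul]
    · rw [dif_pos ha, dif_neg hb, if_neg]
      rintro ⟨rfl, -, e⟩
      exact hb (lt_of_lt_of_le e (Nat.mul_le_mul_right s hhi))
  · rw [dif_neg ha, if_neg]
    rintro ⟨rfl, -, e⟩
    exact ha (lt_of_lt_of_le e (Nat.mul_le_mul_right s hhi))

lemma toFun_padK_smul (c : ℝ) (A : MatR) (s : ℕ) (a b : ℕ) :
    toFun (padK (smulM c A) s) a b = c * toFun (padK A s) a b := by
  unfold toFun padK smulM kron
  dsimp only
  by_cases ha : a < A.1 * s
  · by_cases hb : b < A.2.1 * s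
    · rw [dif_pos ha, dif_pos hb, dif_pos ha, dif_pos hb]
      simp only [Matrix.reindex_apply, Matrix.submatrix_apply, Matrix.kroneckerMap_apply, Matrix.smul_apply,
        smul_eq_mul]
      ring
    · rw [dif_pos ha, dif_neg hb, dif_pos ha, dif_neg hb, mul_zero]
  · rw [dif_neg ha, dif_neg ha, mul_zero]

lemma Dfun_adjacent (a c b : ℕ) (hac : a ≤ c) (hcb : c ≤ b) (x y : ℕ) :
    Dfun c b x y + Dfun a c x y = Dfun a b x y := by
  unfold Dfun
  split_ifs <;> first | (exfalso; omega) | norm_num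

lemma Dfun_nested (c b : ℕ) (hcb : c ≤ b) (x y : ℕ) :
    Dfun 0 b x y + (-1) * Dfun 0 c x y = Dfun c b x y := by
  unfold Dfun
  split_ifs <;> first | (exfalso; omega) | norm_num

lemma staM_Dmat (lo1 hi1 L1 lo2 hi2 L2 N s1 s2 : ℕ)
    (hs1 : 0 < s1) (hs2 : 0 < s2)
    (hL1 : L1 * s1 = N) (hL2 : L2 * s2 = N) (hlcm : Nat.lcm L1 L2 = N)
    (h1 : hi1 ≤ L1) (h2 : hi2 ≤ L2) (hN : 0 < N)
    (hadj : hi2 * s2 = lo1 * s1) (hlo1 : lo1 ≤ hi1) (hlo2 : lo2 ≤ hi2) :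
    staM (Dmat lo1 hi1 L1) (Dmat lo2 hi2 L2) = Dmat (lo2 * s2) (hi1 * s1) N := by
  have hL1pos : 0 < L1 := by
    rcases Nat.eq_zero_or_pos L1 with h | h
    · rw [h, zero_mul] at hL1; omega
    · exact h
  have hL2pos : 0 < L2 := by
    rcases Nat.eq_zero_or_pos L2 with h | h
    · rw [h, zero_mul] at hL2; omega
    · exact h
  have e1 : Nat.lcm L1 L2 / L1 = s1 := by
    rw [hlcm, ← hL1, Nat.mul_div_cancel_left _ hL1pos]
  have e2 : Nat.lcm L1 L2 / L2 = s2 := by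
    rw [hlcm, ← hL2, Nat.mul_div_cancel_left _ hL2pos]
  unfold staM
  have hX : L1 * (Nat.lcm L1 L2 / L1) = N := by rw [e1, hL1]
  apply matR_ext _ _ hlcm hX
  intro a b ha hb
  simp only [Matrix.of_apply]
  show toFun (padK (Dmat lo1 hi1 L1) (Nat.lcm L1 L2 / L1)) a b
    + toFun (padK (Dmat lo2 hi2 L2) (Nat.lcm L1 L2 / L2)) a b = _
  simp only [e1, e2]
  rw [toFun_padK_Dmat _ _ _ _ hs1 h1, toFun_padK_Dmat _ _ _ _ hs2 h2]
  have hsum : Dfun (lo1 * s1) (hi1 * s1) a b + Dfun (lo2 * s2) (hi2 * s2) a b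
      = Dfun (lo2 * s2) (hi1 * s1) a b := by
    rw [hadj]
    exact Dfun_adjacent (lo2 * s2) (lo1 * s1) (hi1 * s1)
      (by rw [← hadj]; exact Nat.mul_le_mul_right s2 hlo2)
      (Nat.mul_le_mul_right s1 hlo1) a b
  rw [hsum]
  rfl

lemma staM_Dmat_sub (hi1 L1 hi2 L2 N s1 s2 : ℕ)
    (hs1 : 0 < s1) (hs2 : 0 < s2)
    (hL1 : L1 * s1 = N) (hL2 : L2 * s2 = N) (hlcm : Nat.lcm L1 L2 = N)
    (h1 : hi1 ≤ L1) (h2 : hi2 ≤ L2) (hN : 0 < N)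
    (hadj : hi2 * s2 ≤ hi1 * s1) :
    staM (Dmat 0 hi1 L1) (smulM (-1) (Dmat 0 hi2 L2)) = Dmat (hi2 * s2) (hi1 * s1) N := by
  have hL1pos : 0 < L1 := by
    rcases Nat.eq_zero_or_pos L1 with h | h
    · rw [h, zero_mul] at hL1; omega
    · exact h
  have hL2pos : 0 < L2 := by
    rcases Nat.eq_zero_or_pos L2 with h | h
    · rw [h, zero_mul] at hL2; omega
    · exact h
  have e1 : Nat.lcm L1 L2 / L1 = s1 := by
    rw [hlcm, ← hL1, Nat.mul_div_cancel_left _ hL1pos]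
  have e2 : Nat.lcm L1 L2 / L2 = s2 := by
    rw [hlcm, ← hL2, Nat.mul_div_cancel_left _ hL2pos]
  unfold staM
  have hX : L1 * (Nat.lcm L1 L2 / L1) = N := by rw [e1, hL1]
  apply matR_ext _ _ hlcm hX
  intro a b ha hb
  simp only [Matrix.of_apply]
  show toFun (padK (Dmat 0 hi1 L1) (Nat.lcm L1 L2 / L1)) a b
    + toFun (padK (smulM (-1) (Dmat 0 hi2 L2)) (Nat.lcm L1 L2 / L2)) a b = _
  simp only [e1, e2]
  rw [toFun_padK_smul, toFun_padK_Dmat _ _ _ _ hs1 h1, toFun_padK_Dmat _ _ _ _ hs2 h2]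
  rw [show (0 * s1 : ℕ) = 0 from zero_mul s1, show (0 * s2 : ℕ) = 0 from zero_mul s2]
  rw [Dfun_nested (hi2 * s2) (hi1 * s1) hadj]
  rfl

lemma unitE_eq_Dmat (j r : ℕ) (hj : 1 ≤ j) :
    unitE j j r r = Dmat (j - 1) j r := by
  unfold unitE Dmat
  apply matR_ext _ _ rfl rfl
  intro a b ha hb
  simp only [Matrix.of_apply]
  by_cases hA : a + 1 = j ∧ b + 1 = j
  · rw [if_pos hA, if_pos (show a = b ∧ j - 1 ≤ a ∧ a < j by omega)]
  · rw [if_neg hA, if_neg (fun h => hA ⟨by omega, by omega⟩)]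

lemma lcm_div_div (i s t : ℕ) (hi : 0 < i) (hs : s ∣ i) (ht : t ∣ i) :
    Nat.lcm (i / s) (i / t) = i / Nat.gcd s t := by
  have hs0 : 0 < s := Nat.pos_of_dvd_of_pos hs hi
  have ht0 : 0 < t := Nat.pos_of_dvd_of_pos ht hi
  set g := Nat.gcd s t with hg
  have hgs : g ∣ s := Nat.gcd_dvd_left s t
  have hgt : g ∣ t := Nat.gcd_dvd_right s t
  have hg0 : 0 < g := Nat.gcd_pos_of_pos_left t hs0
  have hgi : g ∣ i := hgs.trans hs
  apply Nat.dvd_antisymm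
  · apply Nat.lcm_dvd
    · refine ⟨s / g, ?_⟩
      rw [Nat.div_mul_div_comm hs hgs, mul_comm i s, Nat.mul_div_mul_left _ _ hs0]
    · refine ⟨t / g, ?_⟩
      rw [Nat.div_mul_div_comm ht hgt, mul_comm i t, Nat.mul_div_mul_left _ _ ht0]
  · set L := Nat.lcm (i / s) (i / t) with hL
    have h1 : i ∣ s * L := by
      have h : s * (i / s) ∣ s * L := mul_dvd_mul_left s (Nat.dvd_lcm_left _ _)
      rwa [Nat.mul_div_cancel' hs] at h
    have h2 : i ∣ t * L := by
      have h : t * (i / t) ∣ t * L := mul_dvd_mul_left t (Nat.dvd_lcm_right _ _)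
      rwa [Nat.mul_div_cancel' ht] at h
    have h3 : i ∣ g * L := by
      have h := Nat.dvd_gcd h1 h2
      rwa [mul_comm s L, mul_comm t L, Nat.gcd_mul_left, mul_comm L g] at h
    have h4 : g * (i / g) ∣ g * L := by
      rw [Nat.mul_div_cancel' hgi]; exact h3
    exact (mul_dvd_mul_iff_left hg0.ne').mp h4

/-- `(a - d) / d = a / d - 1` when `0 < d ∣ a`. -/
lemma sub_div_self' (a d : ℕ) (hd : 0 < d) (hdvd : d ∣ a) :
    (a - d) / d = a / d - 1 := by
  obtain ⟨c, rfl⟩ := hdvd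
  rcases c with _ | c'
  · simp
  · have h1 : d * (c' + 1) - d = d * c' := by
      have h : d * (c' + 1) = d * c' + d := by ring
      omega
    rw [h1, Nat.mul_div_cancel_left _ hd, Nat.mul_div_cancel_left _ hd]
    omega

/-- `(a / b) * (b / c) = a / c` when `c ∣ b ∣ a`. -/
lemma natDivMulDivCancel (a b c : ℕ) (hb : 0 < b) (hba : b ∣ a) (hcb : c ∣ b) :
    a / b * (b / c) = a / c := by
  rw [Nat.div_mul_div_comm hba hcb, mul_comm a b, Nat.mul_div_mul_left _ _ hb]

end GreedyAux

lemma bigSta_telescope (i J : ℕ) (hi : 0 < i) (hJ : 0 < J) (hJi : J ≤ i)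
    (f : ℕ → ℕ) (m' : ℕ) (hm' : 0 < m')
    (hf : ∀ k < m', f k = Nat.gcd i (J - ∑ α ∈ Finset.range k, f α))
    (hfsum : ∑ k ∈ Finset.range m', f k = J) :
    ∃ s, 0 < s ∧ s ∣ i ∧ s ∣ J ∧
      bigSta (fun k => unitE ((J - ∑ α ∈ Finset.range k, f α) / f k)
        ((J - ∑ α ∈ Finset.range k, f α) / f k) (i / f k) (i / f k)) (m' - 1)
        = Dmat 0 (J / s) (i / s) := by
  set F := fun k => unitE ((J - ∑ α ∈ Finset.range k, f α) / f k)
    ((J - ∑ α ∈ Finset.range k, f α) / f k) (i / f k) (i / f k) with hF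
  have hfpos : ∀ k, k < m' → 0 < f k := by
    intro k hk; rw [hf k hk]; exact Nat.gcd_pos_of_pos_left _ hi
  have hsum_le : ∀ k, k ≤ m' → ∑ α ∈ Finset.range k, f α + (m' - k) ≤ J := by
    intro k hk
    have hsplit : ∑ α ∈ Finset.range k, f α + ∑ α ∈ Finset.Ico k m', f α
        = ∑ α ∈ Finset.range m', f α := Finset.sum_range_add_sum_Ico f hk
    have hlb : (Finset.Ico k m').card • 1 ≤ ∑ α ∈ Finset.Ico k m', f α := by
      apply Finset.card_nsmul_le_sum
      intro x hx
      exact hfpos x (Finset.mem_Ico.mp hx).2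
    rw [Nat.card_Ico, smul_eq_mul, mul_one] at hlb
    omega
  have hrpos : ∀ k, k < m' → 0 < J - ∑ α ∈ Finset.range k, f α := by
    intro k hk; have := hsum_le k (le_of_lt hk); omega
  have hfd_i : ∀ k, k < m' → f k ∣ i := by
    intro k hk; rw [hf k hk]; exact Nat.gcd_dvd_left _ _
  have hfd_r : ∀ k, k < m' → f k ∣ (J - ∑ α ∈ Finset.range k, f α) := by
    intro k hk; rw [hf k hk]; exact Nat.gcd_dvd_right _ _
  have claim : ∀ k, k < m' → ∃ s, 0 < s ∧ s ∣ i ∧ s ∣ J ∧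
      s ∣ (J - ∑ α ∈ Finset.range (k + 1), f α) ∧
      bigSta F k = Dmat ((J - ∑ α ∈ Finset.range (k + 1), f α) / s) (J / s) (i / s) := by
    intro k
    induction k with
    | zero =>
      intro hk
      refine ⟨f 0, hfpos 0 hk, hfd_i 0 hk, ?_, ?_, ?_⟩
      · have := hfd_r 0 hk; simpa using this
      · have h1 := hfd_r 0 hk
        simp only [Finset.range_zero, Finset.sum_empty, Nat.sub_zero, zero_add] at h1
        rw [Finset.sum_range_one]
        exact Nat.dvd_sub h1 dvd_rfl
      · have h1 : bigSta F 0 = F 0 := rfl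
        rw [h1, hF]
        simp only [Finset.range_zero, Finset.sum_empty, Nat.sub_zero, zero_add]
        have hdJ : f 0 ∣ J := by
          have := hfd_r 0 hk; simpa using this
        have h2 : 1 ≤ J / f 0 := (Nat.one_le_div_iff (hfpos 0 hk)).mpr
          (Nat.le_of_dvd hJ hdJ)
        rw [unitE_eq_Dmat _ _ h2]
        rw [Finset.sum_range_one, sub_div_self' J (f 0) (hfpos 0 hk) hdJ]
    | succ k ih =>
      intro hk1
      have hk : k < m' := by omega
      obtain ⟨s, hs0, hsi, hsJ, hsr, heq⟩ := ih hk
      set r1 := J - ∑ α ∈ Finset.range (k + 1), f α with hr1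
      set r2 := J - ∑ α ∈ Finset.range (k + 2), f α with hr2d
      have hsumsucc : ∑ α ∈ Finset.range (k + 2), f α
          = ∑ α ∈ Finset.range (k + 1), f α + f (k + 1) := Finset.sum_range_succ f (k + 1)
      have hr2 : r2 = r1 - f (k + 1) := by rw [hr2d, hr1, hsumsucc]; omega
      have hf'pos : 0 < f (k + 1) := hfpos (k + 1) hk1
      have hf'i : f (k + 1) ∣ i := hfd_i (k + 1) hk1
      have hf'r1 : f (k + 1) ∣ r1 := hfd_r (k + 1) hk1
      have hr1pos : 0 < r1 := hrpos (k + 1) hk1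
      have hf'r2 : f (k + 1) ∣ r2 := by rw [hr2]; exact Nat.dvd_sub hf'r1 dvd_rfl
      set g := Nat.gcd s (f (k + 1)) with hgdef
      have hgs : g ∣ s := Nat.gcd_dvd_left _ _
      have hgf : g ∣ f (k + 1) := Nat.gcd_dvd_right _ _
      have hg0 : 0 < g := Nat.gcd_pos_of_pos_left _ hs0
      have hgi : g ∣ i := hgs.trans hsi
      have hgJ : g ∣ J := hgs.trans hsJ
      have hgr2 : g ∣ r2 := hgf.trans hf'r2
      have hr1J : r1 ≤ J := by rw [hr1]; omega
      have hr1i : r1 ≤ i := le_trans hr1J hJi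
      refine ⟨g, hg0, hgi, hgJ, hgr2, ?_⟩
      have hstep : bigSta F (k + 1) = staM (bigSta F k) (F (k + 1)) := rfl
      have hFk1 : F (k + 1) = Dmat (r2 / f (k + 1)) (r1 / f (k + 1)) (i / f (k + 1)) := by
        have h2 : 1 ≤ r1 / f (k + 1) := (Nat.one_le_div_iff hf'pos).mpr
          (Nat.le_of_dvd hr1pos hf'r1)
        rw [hF]
        dsimp only
        rw [← hr1, unitE_eq_Dmat _ _ h2, hr2, sub_div_self' r1 (f (k + 1)) hf'pos hf'r1]
      rw [hstep, heq, hFk1]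
      have hres := staM_Dmat (r1 / s) (J / s) (i / s) (r2 / f (k + 1)) (r1 / f (k + 1))
        (i / f (k + 1)) (i / g) (s / g) (f (k + 1) / g)
        (Nat.div_pos (Nat.le_of_dvd hs0 hgs) hg0)
        (Nat.div_pos (Nat.le_of_dvd hf'pos hgf) hg0)
        (natDivMulDivCancel i s g hs0 hsi hgs)
        (natDivMulDivCancel i (f (k + 1)) g hf'pos hf'i hgf)
        (lcm_div_div i s (f (k + 1)) hi hsi hf'i)
        (Nat.div_le_div_right hJi)
        (Nat.div_le_div_right hr1i)
        (Nat.div_pos (Nat.le_of_dvd hi hgi) hg0)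
        (by rw [natDivMulDivCancel r1 (f (k + 1)) g hf'pos hf'r1 hgf,
              natDivMulDivCancel r1 s g hs0 hsr hgs])
        (Nat.div_le_div_right hr1J)
        (Nat.div_le_div_right (by rw [hr2]; omega))
      rw [hres, natDivMulDivCancel r2 (f (k + 1)) g hf'pos hf'r2 hgf,
        natDivMulDivCancel J s g hs0 hsJ hgs]
  obtain ⟨s, hs0, hsi, hsJ, -, heq⟩ := claim (m' - 1) (by omega)
  refine ⟨s, hs0, hsi, hsJ, ?_⟩
  have hm'e : m' - 1 + 1 = m' := by omega
  rw [hm'e, hfsum, Nat.sub_self, Nat.zero_div] at heq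
  exact heq

/-- greedy-gcd decomposition of a diagonal matrix unit.  If
`1 ≤ j ≤ i`, `gcd(i,j) > 1`, and `f, g` are the greedy gcd sequences with
`f₁ + ⋯ + f_{m'} = j` and `g₁ + ⋯ + g_m = j - 1`, then
`E_{jj}^{i×i} = (⊞_{n'} E_{j̄'_{n'} j̄'_{n'}}^{ī'_{n'}×ī'_{n'}}) ⊟ (⊞_n E_{j̄_n j̄_n}^{ī_n×ī_n})`,
and each pair satisfies `gcd(ī,j̄) = 1`. -/
theorem unitE_greedy_gcd_decomposition (i j : ℕ) (h1j : 1 ≤ j) (hji : j ≤ i)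
    (hgcd : 1 < Nat.gcd i j)
    (f g : ℕ → ℕ) (m' m : ℕ) (hm' : 0 < m') (hm : 0 < m)
    (hf : ∀ k < m', f k = Nat.gcd i (j - ∑ α ∈ Finset.range k, f α))
    (hfsum : ∑ k ∈ Finset.range m', f k = j)
    (hgg : ∀ k < m, g k = Nat.gcd i (j - 1 - ∑ α ∈ Finset.range k, g α))
    (hgsum : ∑ k ∈ Finset.range m, g k = j - 1) :
    unitE j j i i =
      staM
        (bigSta (fun k =>
          unitE ((j - ∑ α ∈ Finset.range k, f α) / f k)
            ((j - ∑ α ∈ Finset.range k, f α) / f k) (i / f k) (i / f k)) (m' - 1))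
        (smulM (-1)
          (bigSta (fun k =>
            unitE ((j - 1 - ∑ α ∈ Finset.range k, g α) / g k)
              ((j - 1 - ∑ α ∈ Finset.range k, g α) / g k) (i / g k) (i / g k)) (m - 1))) ∧
    (∀ k < m', Nat.gcd (i / f k) ((j - ∑ α ∈ Finset.range k, f α) / f k) = 1) ∧
    (∀ k < m, Nat.gcd (i / g k) ((j - 1 - ∑ α ∈ Finset.range k, g α) / g k) = 1) := by
  have hi : 0 < i := lt_of_lt_of_le h1j hji
  have hj2 : 2 ≤ j := by
    rcases Nat.lt_or_ge j 2 with h | h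
    · have hj1 : j = 1 := by omega
      rw [hj1, Nat.gcd_one_right] at hgcd
      omega
    · exact h
  obtain ⟨s, hs0, hsi, hsJ, heq1⟩ :=
    bigSta_telescope i j hi (by omega) hji f m' hm' hf hfsum
  obtain ⟨t, ht0, hti, htJ, heq2⟩ :=
    bigSta_telescope i (j - 1) hi (by omega) (by omega) g m hm hgg hgsum
  have hst : Nat.gcd s t = 1 := by
    have d1 : Nat.gcd s t ∣ j := (Nat.gcd_dvd_left s t).trans hsJ
    have d2 : Nat.gcd s t ∣ j - 1 := (Nat.gcd_dvd_right s t).trans htJ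
    have d3 : Nat.gcd s t ∣ j - (j - 1) := Nat.dvd_sub d1 d2
    rw [show j - (j - 1) = 1 by omega] at d3
    exact Nat.dvd_one.mp d3
  refine ⟨?_, ?_, ?_⟩
  · rw [heq1, heq2]
    have hres := staM_Dmat_sub (j / s) (i / s) ((j - 1) / t) (i / t) i s t hs0 ht0
      (Nat.div_mul_cancel hsi) (Nat.div_mul_cancel hti)
      (by rw [lcm_div_div i s t hi hsi hti, hst, Nat.div_one])
      (Nat.div_le_div_right hji) (Nat.div_le_div_right (by omega)) hi
      (by rw [Nat.div_mul_cancel hsJ, Nat.div_mul_cancel htJ]; omega)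
    rw [hres, Nat.div_mul_cancel hsJ, Nat.div_mul_cancel htJ]
    exact unitE_eq_Dmat j i h1j
  · intro k hk
    rw [hf k hk]
    exact Nat.coprime_div_gcd_div_gcd (Nat.gcd_pos_of_pos_left _ hi)
  · intro k hk
    rw [hgg k hk]
    exact Nat.coprime_div_gcd_div_gcd (Nat.gcd_pos_of_pos_left _ hi)
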